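/- Welch bound: if A is an m×N complex matrix with 1 ≤ m ≤ N, N ≥ 2, whose columns a_1,...,a_N each have unit Euclidean norm, then the coherence μ = max_{i≠k} |⟨a_i, a_k⟩| satisfies μ ≥ sqrt((N−m)/(m(N−1))). -/

import Mathlib

open Finset

theorem stmt_13 (N m : ℕ) (hN : 2 ≤ N) (hm : 1 ≤ m) (hmN : m ≤ N)
    (a : Fin m → Fin N → ℂ)
    (hcol : ∀ k : Fin N, ∑ i, Complex.normSq (a i k) = 1)
    (μ : ℝ)
    (hμ : IsGreatest {x : ℝ | ∃ i k : Fin N, i ≠ k ∧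
        x = ‖∑ r, (starRingEnd ℂ) (a r i) * a r k‖} μ) :
    Real.sqrt (((N : ℝ) - m) / (m * ((N : ℝ) - 1))) ≤ μ := by
  classical
  obtain ⟨⟨i0, k0, hik0, hμeq⟩, hub⟩ := hμ
  have hμnn : 0 ≤ μ := hμeq ▸ norm_nonneg _
  set A : Matrix (Fin m) (Fin N) ℂ := Matrix.of a with hA
  set G : Matrix (Fin N) (Fin N) ℂ := A.conjTranspose * A with hG
  set C : Matrix (Fin m) (Fin m) ℂ := A * A.conjTranspose with hC
  have hGentry : ∀ i k, G i k = ∑ r, (starRingEnd ℂ) (a r i) * a r k := by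
    intro i k
    simp [hG, Matrix.mul_apply, Matrix.conjTranspose_apply, hA]
  have hCentry : ∀ r s, C r s = ∑ k, a r k * (starRingEnd ℂ) (a s k) := by
    intro r s
    simp [hC, Matrix.mul_apply, Matrix.conjTranspose_apply, hA]
  have hGsymm : ∀ i k, G k i = (starRingEnd ℂ) (G i k) := by
    intro i k
    simp only [hGentry, map_sum, map_mul, Complex.conj_conj]
    exact Finset.sum_congr rfl fun r _ => mul_comm _ _
  have hCsymm : ∀ r s, C s r = (starRingEnd ℂ) (C r s) := by
    intro r s
    simp only [hCentry, map_sum, map_mul, Complex.conj_conj]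
    exact Finset.sum_congr rfl fun k _ => mul_comm _ _
  have htr : (G * G).trace = (C * C).trace := by
    rw [hG, hC, Matrix.mul_assoc, Matrix.trace_mul_comm, Matrix.mul_assoc,
      ← Matrix.mul_assoc]
    rw [← Matrix.mul_assoc A A.conjTranspose A,
      Matrix.mul_assoc (A * A.conjTranspose) A A.conjTranspose]
  have hGtr : (G * G).trace = ∑ i, ∑ k, (Complex.normSq (G i k) : ℂ) := by
    simp only [Matrix.trace, Matrix.diag, Matrix.mul_apply]
    refine Finset.sum_congr rfl fun i _ => Finset.sum_congr rfl fun k _ => ?_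
    rw [hGsymm i k, Complex.mul_conj]
  have hCtr : (C * C).trace = ∑ r, ∑ s, (Complex.normSq (C r s) : ℂ) := by
    simp only [Matrix.trace, Matrix.diag, Matrix.mul_apply]
    refine Finset.sum_congr rfl fun r _ => Finset.sum_congr rfl fun s _ => ?_
    rw [hCsymm r s, Complex.mul_conj]
  have keyR : ∑ i, ∑ k, Complex.normSq (G i k) = ∑ r, ∑ s, Complex.normSq (C r s) := by
    have := hGtr ▸ hCtr ▸ htr
    exact_mod_cast this
  -- diagonal of C
  set t : Fin m → ℝ := fun r => ∑ k, Complex.normSq (a r k) with ht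
  have hCdiag : ∀ r, C r r = (t r : ℂ) := by
    intro r
    rw [hCentry]
    push_cast [ht]
    exact Finset.sum_congr rfl fun k _ => (Complex.mul_conj _)
  have htsum : ∑ r, t r = N := by
    rw [ht]
    rw [Finset.sum_comm]
    simp [hcol]
  -- lower bound on RHS of keyR
  have hlow : (N : ℝ)^2 / m ≤ ∑ r, ∑ s, Complex.normSq (C r s) := by
    have h1 : ∑ r, Complex.normSq (C r r) ≤ ∑ r, ∑ s, Complex.normSq (C r s) := by
      refine Finset.sum_le_sum fun r _ => ?_
      exact Finset.single_le_sum (fun s _ => Complex.normSq_nonneg _) (Finset.mem_univ r)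
    have h2 : ∑ r, Complex.normSq (C r r) = ∑ r, t r ^ 2 := by
      refine Finset.sum_congr rfl fun r _ => ?_
      rw [hCdiag, Complex.normSq_ofReal, sq]
    have h3 : ((N : ℝ))^2 ≤ m * ∑ r, t r ^ 2 := by
      have := sq_sum_le_card_mul_sum_sq (s := (Finset.univ : Finset (Fin m))) (f := t)
      simpa [htsum] using this
    have hmpos : (0:ℝ) < m := by exact_mod_cast hm
    rw [div_le_iff₀ hmpos]
    nlinarith [h1, h2, h3]
  -- upper bound on LHS of keyR
  have hGdiag : ∀ i, G i i = 1 := by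
    intro i
    rw [hGentry]
    have : ∀ r : Fin m, (starRingEnd ℂ) (a r i) * a r i = (Complex.normSq (a r i) : ℂ) := by
      intro r; rw [mul_comm, Complex.mul_conj]
    rw [Finset.sum_congr rfl fun r _ => this r]
    push_cast
    exact_mod_cast congrArg (Complex.ofReal) (hcol i)
  have hoff : ∀ i k : Fin N, i ≠ k → Complex.normSq (G i k) ≤ μ ^ 2 := by
    intro i k hik
    have h := hub ⟨i, k, hik, rfl⟩
    rw [← hGentry] at h
    have : Complex.normSq (G i k) = (‖G i k‖) ^ 2 := (Complex.sq_norm _).symm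
    rw [this]
    exact pow_le_pow_left₀ (norm_nonneg _) h 2
  have hup : ∑ i, ∑ k, Complex.normSq (G i k) ≤ N + (N * (N - 1) : ℝ) * μ ^ 2 := by
    have hstep : ∀ i : Fin N, ∑ k, Complex.normSq (G i k) ≤ 1 + ((N : ℝ) - 1) * μ ^ 2 := by
      intro i
      rw [← Finset.add_sum_erase _ _ (Finset.mem_univ i)]
      have h1 : Complex.normSq (G i i) = 1 := by rw [hGdiag]; simp
      have h2 : ∑ k ∈ Finset.univ.erase i, Complex.normSq (G i k) ≤ ((N : ℝ) - 1) * μ ^ 2 := by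
        have hcard : ((Finset.univ.erase i).card : ℝ) = (N : ℝ) - 1 := by
          rw [Finset.card_erase_of_mem (Finset.mem_univ i)]
          simp
          rw [Nat.cast_sub (by omega)]
          simp
        calc ∑ k ∈ Finset.univ.erase i, Complex.normSq (G i k)
            ≤ ∑ k ∈ Finset.univ.erase i, μ ^ 2 := by
              refine Finset.sum_le_sum fun k hk => hoff i k ?_
              exact fun h => (Finset.mem_erase.mp hk).1 h.symm
          _ = ((Finset.univ.erase i).card : ℝ) * μ ^ 2 := by
              rw [Finset.sum_const, nsmul_eq_mul]
          _ = ((N : ℝ) - 1) * μ ^ 2 := by rw [hcard]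
      linarith
    calc ∑ i, ∑ k, Complex.normSq (G i k)
        ≤ ∑ i : Fin N, (1 + ((N : ℝ) - 1) * μ ^ 2) := Finset.sum_le_sum fun i _ => hstep i
      _ = N * (1 + ((N : ℝ) - 1) * μ ^ 2) := by rw [Finset.sum_const, nsmul_eq_mul]; simp
      _ = N + (N * (N - 1) : ℝ) * μ ^ 2 := by ring
  -- combine
  have hkey : ((N : ℝ) - m) / (m * ((N : ℝ) - 1)) ≤ μ ^ 2 := by
    have hNpos : (2:ℝ) ≤ N := by exact_mod_cast hN
    have hmpos : (1:ℝ) ≤ m := by exact_mod_cast hm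
    have hmN' : (m:ℝ) ≤ N := by exact_mod_cast hmN
    have hmain : (N : ℝ)^2 / m ≤ N + (N * (N - 1) : ℝ) * μ ^ 2 := by
      calc (N : ℝ)^2 / m ≤ ∑ r, ∑ s, Complex.normSq (C r s) := hlow
        _ = ∑ i, ∑ k, Complex.normSq (G i k) := keyR.symm
        _ ≤ N + (N * (N - 1) : ℝ) * μ ^ 2 := hup
    have hden : (0:ℝ) < m * ((N:ℝ) - 1) := by nlinarith
    rw [div_le_iff₀ hden]
    have h' : (N : ℝ)^2 ≤ (N + (N * (N - 1) : ℝ) * μ ^ 2) * m := by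
      rw [div_le_iff₀ (by linarith : (0:ℝ) < (m:ℝ))] at hmain
      linarith
    nlinarith [h']
  calc Real.sqrt (((N : ℝ) - m) / (m * ((N : ℝ) - 1))) ≤ Real.sqrt (μ ^ 2) :=
        Real.sqrt_le_sqrt hkey
    _ = μ := by rw [Real.sqrt_sq hμnn]
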